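/- Let A ⊂ ℝⁿ be an admissible locally BV set, let F and G be charges in A, and let f be a function defined on cl_*A. If F is an indefinite R integral of f in A with respect to G, then F is also an indefinite packing R integral of f in A with respect to G. -/

import Mathlib

open MeasureTheory Metric Set Filter
open scoped ENNReal NNReal

noncomputable section

abbrev En (n : ℕ) : Type := EuclideanSpace ℝ (Fin n)

variable {n : ℕ}

/-- The essential interior of `A`: points of Lebesgue density 1. -/
def essInterior (A : Set (En n)) : Set (En n) :=
  {x | Tendsto (fun r : ℝ => volume (A ∩ ball x r) / volume (ball x r))
      (nhdsWithin 0 (Ioi 0)) (nhds 1)}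

/-- The essential closure of `A`: points of positive upper Lebesgue density. -/
def essClosure (A : Set (En n)) : Set (En n) :=
  {x | 0 < Filter.limsup (fun r : ℝ => volume (A ∩ ball x r) / volume (ball x r))
      (nhdsWithin 0 (Ioi 0))}

/-- The essential boundary of `A`. -/
def essBoundary (A : Set (En n)) : Set (En n) := essClosure A \ essInterior A

/-- Perimeter: the `(n-1)`-dimensional Hausdorff measure of the essential boundary. -/
def perim (E : Set (En n)) : ℝ≥0∞ := μH[(n : ℝ) - 1] (essBoundary E)

/-- A bounded BV set. -/
def IsBVSet (E : Set (En n)) : Prop :=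
  MeasurableSet E ∧ Bornology.IsBounded E ∧ volume E < ⊤ ∧ perim E < ⊤

/-- A locally BV set. -/
def IsLocBVSet (A : Set (En n)) : Prop :=
  MeasurableSet A ∧ ∀ U : Set (En n), IsOpen U → Bornology.IsBounded U →
    μH[(n : ℝ) - 1] (essBoundary A ∩ U) < ⊤

/-- An admissible set: `int_* A ⊆ A ⊆ cl_* A`. -/
def IsAdmissible (A : Set (En n)) : Prop :=
  essInterior A ⊆ A ∧ A ⊆ essClosure A

/-- A charge. -/
def IsCharge (F : Set (En n) → ℝ) : Prop :=
  (∀ A B : Set (En n), IsBVSet A → IsBVSet B → Disjoint A B → F (A ∪ B) = F A + F B) ∧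
  ∀ ε : ℝ, 0 < ε → ∃ η : ℝ, 0 < η ∧ ∀ C : Set (En n), IsBVSet C →
    C ⊆ ball 0 (1 / ε) → perim C < ENNReal.ofReal (1 / ε) →
    volume C < ENNReal.ofReal η → |F C| < ε

/-- Regularity of the pair `(E, x)`. -/
def regPair (E : Set (En n)) (x : En n) : ℝ :=
  if volume E = 0 then 0
  else (volume E).toReal / (Metric.diam (E ∪ {x}) * (perim E).toReal)

/-- Regularity of the set `E`. -/
def regSet (E : Set (En n)) : ℝ :=
  if volume E = 0 then 0
  else (volume E).toReal / (Metric.diam E * (perim E).toReal)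

/-- Relative perimeter of `T` in `E`. -/
def relPerim (T E : Set (En n)) : ℝ≥0∞ :=
  μH[(n : ℝ) - 1] (essBoundary T ∩ essInterior E)

/-- `E` is `ε`-isoperimetric. -/
def IsIsoperimetric (ε : ℝ) (E : Set (En n)) : Prop :=
  ∀ T : Set (En n), IsBVSet T →
    min (perim (E ∩ T)) (perim (E \ T)) ≤ ENNReal.ofReal (1 / ε) * relPerim T E

/-- The seminorm `q̄^ε_{x,r}`. -/
def qSem (ε : ℝ) (x : En n) (r : ℝ) (F : Set (En n) → ℝ) : ℝ≥0∞ :=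
  ⨆ (E : Set (En n)) (_ : IsBVSet E ∧ IsCompact (closure E) ∧ closure E ⊆ ball x r ∧
      x ∈ essClosure E ∧ ε < regPair E x ∧ IsIsoperimetric ε E),
    ENNReal.ofReal |F E|

/-- The seminorm `p̄^ε_{x,r}`. -/
def pSem (ε : ℝ) (x : En n) (r : ℝ) (F : Set (En n) → ℝ) : ℝ≥0∞ :=
  ⨆ (E : Set (En n)) (_ : IsBVSet E ∧ IsCompact (closure E) ∧ closure E ⊆ ball x r ∧
      ε < regPair E x),
    ENNReal.ofReal |F E|

/-- A set of σ-finite `H^{n-1}` measure. -/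
def SigmaFiniteHnm1 (N : Set (En n)) : Prop :=
  ∃ f : ℕ → Set (En n), N ⊆ ⋃ i, f i ∧ ∀ i, μH[(n : ℝ) - 1] (f i) < ⊤

/-- A gage on `S`. -/
def IsGage (S : Set (En n)) (δ : En n → ℝ) : Prop :=
  (∀ x ∈ S, 0 ≤ δ x) ∧ SigmaFiniteHnm1 {x | x ∈ S ∧ δ x = 0}

/-- A packing: finitely many pairwise disjoint open balls. -/
def IsPacking {k : ℕ} (x : Fin k → En n) (r : Fin k → ℝ) : Prop :=
  (∀ i, 0 < r i) ∧ ∀ i j : Fin k, i ≠ j → Disjoint (ball (x i) (r i)) (ball (x j) (r j))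

/-- A `δ`-fine packing with tags in `S`. -/
def IsFinePacking {k : ℕ} (S : Set (En n)) (δ : En n → ℝ) (x : Fin k → En n)
    (r : Fin k → ℝ) : Prop :=
  ∀ i, x i ∈ S ∧ 2 * r i < δ (x i)

/-- `F` is an indefinite packing R* integral of `f` w.r.t. `G`, with tags in `S`
and witnessing constant `τ`. -/
def PackingRStarWith (S : Set (En n)) (τ : ℝ) (F : Set (En n) → ℝ) (f : En n → ℝ)
    (G : Set (En n) → ℝ) : Prop :=
  ∀ ε : ℝ, 0 < ε → ∃ δ : En n → ℝ, IsGage S δ ∧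
    ∀ (k : ℕ) (x : Fin k → En n) (r : Fin k → ℝ), IsPacking x r →
      IsFinePacking S δ x r →
      ∑ i, qSem ε (x i) (τ * r i) (fun E => F E - f (x i) * G E) < ENNReal.ofReal ε

/-- `F` is an indefinite packing R* integral of `f` w.r.t. `G`, with tags in `S`. -/
def PackingRStar (S : Set (En n)) (F : Set (En n) → ℝ) (f : En n → ℝ)
    (G : Set (En n) → ℝ) : Prop :=
  ∃ τ : ℝ, τ ∈ Ioc (0 : ℝ) 1 ∧ PackingRStarWith S τ F f G

/-- `F` is an indefinite packing R integral of `f` w.r.t. `G`, with tags in `S`. -/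
def PackingR (S : Set (En n)) (F : Set (En n) → ℝ) (f : En n → ℝ)
    (G : Set (En n) → ℝ) : Prop :=
  ∃ τ : ℝ, τ ∈ Ioc (0 : ℝ) 1 ∧
    ∀ ε : ℝ, 0 < ε → ∃ δ : En n → ℝ, IsGage S δ ∧
      ∀ (k : ℕ) (x : Fin k → En n) (r : Fin k → ℝ), IsPacking x r →
        IsFinePacking S δ x r →
        ∑ i, pSem ε (x i) (τ * r i) (fun E => F E - f (x i) * G E) < ENNReal.ofReal ε


/-- A BV partition: finitely many pairwise disjoint bounded BV sets with tags. -/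
def IsBVPartition {n : ℕ} {k : ℕ} (E : Fin k → Set (En n)) : Prop :=
  (∀ i, IsBVSet (E i)) ∧ ∀ i j : Fin k, i ≠ j → Disjoint (E i) (E j)

/-- `F` is an indefinite R integral of `f` in `A` with respect to `G`. -/
def RIntegralOn {n : ℕ} (A : Set (En n)) (F : Set (En n) → ℝ) (f : En n → ℝ)
    (G : Set (En n) → ℝ) : Prop :=
  ∀ ε : ℝ, 0 < ε → ∃ δ : En n → ℝ, IsGage (essClosure A) δ ∧
    ∀ (k : ℕ) (E : Fin k → Set (En n)) (x : Fin k → En n),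
      IsBVPartition E → (∀ i, ε < regPair (E i) (x i)) →
      (∀ i, x i ∈ essClosure A ∧ Metric.diam (E i ∪ {x i}) < δ (x i)) →
      ∑ i, |F (E i) - f (x i) * G (E i)| < ε

/-- `F` is an intrinsic indefinite R integral of `f` in `A` with respect to `G`:
only partitions with `⋃ᵢ Aᵢ ⊆ A` are tested. -/
def IntrinsicRIntegralOn {n : ℕ} (A : Set (En n)) (F : Set (En n) → ℝ) (f : En n → ℝ)
    (G : Set (En n) → ℝ) : Prop :=
  ∀ ε : ℝ, 0 < ε → ∃ δ : En n → ℝ, IsGage (essClosure A) δ ∧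
    ∀ (k : ℕ) (E : Fin k → Set (En n)) (x : Fin k → En n),
      IsBVPartition E → (⋃ i, E i) ⊆ A → (∀ i, ε < regPair (E i) (x i)) →
      (∀ i, x i ∈ essClosure A ∧ Metric.diam (E i ∪ {x i}) < δ (x i)) →
      ∑ i, |F (E i) - f (x i) * G (E i)| < ε

private lemma sum_iSup_le_aux {ι κ : Type*} [Nonempty κ] (s : Finset ι)
    (f : ι → κ → ℝ≥0∞) (a : ℝ≥0∞)
    (h : ∀ g : ι → κ, ∑ i ∈ s, f i (g i) ≤ a) :
    ∑ i ∈ s, ⨆ j, f i j ≤ a := by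
  classical
  induction s using Finset.induction_on generalizing a with
  | empty => simpa using h (fun _ => Classical.arbitrary κ)
  | @insert i s hi ih =>
    rcases eq_or_ne a ∞ with ha | ha
    · simp [ha]
    rw [Finset.sum_insert hi]
    have hfij : ∀ j, f i j ≤ a := by
      intro j
      refine le_trans ?_ (h (fun _ => j))
      rw [Finset.sum_insert hi]
      exact le_add_right le_rfl
    have key : ∀ j, ∑ m ∈ s, ⨆ j', f m j' ≤ a - f i j := by
      intro j
      refine ih _ (fun g => ENNReal.le_sub_of_add_le_left (ne_top_of_le_ne_top ha (hfij j)) ?_)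
      have := h (Function.update g i j)
      rw [Finset.sum_insert hi, Function.update_self] at this
      have hcong : ∑ m ∈ s, f m (Function.update g i j m) = ∑ m ∈ s, f m (g m) :=
        Finset.sum_congr rfl fun m hm => by
          rw [Function.update_of_ne (ne_of_mem_of_not_mem hm hi)]
      rwa [hcong] at this
    rw [ENNReal.iSup_add]
    refine iSup_le fun j => ?_
    calc f i j + ∑ m ∈ s, ⨆ j', f m j' ≤ f i j + (a - f i j) :=
          add_le_add_right (key j) _
      _ = a := add_tsub_cancel_of_le (hfij j)

/-- If `F` is an indefinite R integral of `f` in the admissible locally BV set `A`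
with respect to `G`, then `F` is also an indefinite packing R integral of `f` in `A`
with respect to `G`. -/
theorem packingR_of_rIntegral {n : ℕ} (hn : 1 ≤ n)
    (A : Set (En n)) (hA : IsLocBVSet A) (hAad : IsAdmissible A)
    (F G : Set (En n) → ℝ) (hF : IsCharge F) (hG : IsCharge G)
    (hFA : ∀ E : Set (En n), IsBVSet E → F E = F (E ∩ A))
    (hGA : ∀ E : Set (En n), IsBVSet E → G E = G (E ∩ A))
    (f : En n → ℝ) (h : RIntegralOn A F f G) :
    PackingR (essClosure A) F f G := by
  classical
  refine ⟨1, ⟨one_pos, le_refl 1⟩, ?_⟩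
  intro ε hε
  obtain ⟨δ, hδ, hpart⟩ := h (ε / 2) (by linarith)
  refine ⟨δ, hδ, ?_⟩
  intro k x r hpack hfine
  have main : ∑ i, pSem ε (x i) (1 * r i) (fun E => F E - f (x i) * G E)
      ≤ ENNReal.ofReal (ε / 2) := by
    unfold pSem
    refine sum_iSup_le_aux Finset.univ _ _ ?_
    intro g
    set P : Fin k → Prop := fun i => IsBVSet (g i) ∧ IsCompact (closure (g i)) ∧
        closure (g i) ⊆ ball (x i) (1 * r i) ∧ ε < regPair (g i) (x i) with hP
    have hsum1 : ∀ i : Fin k,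
        (⨆ (_ : IsBVSet (g i) ∧ IsCompact (closure (g i)) ∧
            closure (g i) ⊆ ball (x i) (1 * r i) ∧ ε < regPair (g i) (x i)),
          ENNReal.ofReal |F (g i) - f (x i) * G (g i)|)
        = if P i then ENNReal.ofReal |F (g i) - f (x i) * G (g i)| else 0 := by
      intro i
      by_cases hpi : P i
      · rw [if_pos hpi]; exact iSup_pos hpi
      · rw [if_neg hpi]; exact iSup_neg hpi
    calc ∑ i : Fin k, (⨆ (_ : IsBVSet (g i) ∧ IsCompact (closure (g i)) ∧
            closure (g i) ⊆ ball (x i) (1 * r i) ∧ ε < regPair (g i) (x i)),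
          ENNReal.ofReal |F (g i) - f (x i) * G (g i)|)
        = ∑ i ∈ Finset.univ.filter P, ENNReal.ofReal |F (g i) - f (x i) * G (g i)| := by
          rw [Finset.sum_filter]; exact Finset.sum_congr rfl fun i _ => hsum1 i
      _ ≤ ENNReal.ofReal (ε / 2) := ?_
    set T := Finset.univ.filter P with hT
    have hsum2 : ∑ i ∈ T, ENNReal.ofReal |F (g i) - f (x i) * G (g i)|
        = ENNReal.ofReal (∑ i ∈ T, |F (g i) - f (x i) * G (g i)|) :=
      (ENNReal.ofReal_sum_of_nonneg fun i _ => abs_nonneg _).symm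
    rw [hsum2]
    refine ENNReal.ofReal_le_ofReal ?_
    set m := T.card with hm
    set e := T.orderIsoOfFin rfl with he
    set E' : Fin m → Set (En n) := fun j => g ((e j : Fin k)) with hE'
    set x' : Fin m → En n := fun j => x ((e j : Fin k)) with hx'
    have hPe : ∀ j : Fin m, P ((e j : Fin k)) := by
      intro j
      have hmem : (e j : Fin k) ∈ T := (e j).2
      exact (Finset.mem_filter.mp hmem).2
    have hsub : ∀ j : Fin m, E' j ∪ {x' j} ⊆ ball (x' j) (r ((e j : Fin k))) := by
      intro j
      rintro y (hy | hy)
      · have := (hPe j).2.2.1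
        rw [one_mul] at this
        exact this (subset_closure hy)
      · rw [Set.mem_singleton_iff] at hy
        subst hy
        exact mem_ball_self (hpack.1 _)
    have hkey : ∑ j : Fin m, |F (E' j) - f (x' j) * G (E' j)| < ε / 2 := by
      refine hpart m E' x' ⟨fun j => (hPe j).1, ?_⟩ ?_ ?_
      · intro j j' hjj'
        have hne : (e j : Fin k) ≠ (e j' : Fin k) := by
          intro hcontra
          exact hjj' (e.injective (Subtype.ext hcontra))
        have hdb := hpack.2 _ _ hne
        exact hdb.mono (fun y hy => hsub j (Or.inl hy)) (fun y hy => hsub j' (Or.inl hy))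
      · intro j
        have := (hPe j).2.2.2
        linarith
      · intro j
        refine ⟨(hfine _).1, ?_⟩
        have h1 : Metric.diam (E' j ∪ {x' j}) ≤ 2 * r ((e j : Fin k)) := by
          refine le_trans (Metric.diam_mono (hsub j) Metric.isBounded_ball) ?_
          exact Metric.diam_ball (hpack.1 _).le
        exact lt_of_le_of_lt h1 (hfine _).2
    refine le_of_lt ?_
    calc ∑ i ∈ T, |F (g i) - f (x i) * G (g i)|
        = ∑ i ∈ T.attach, |F (g i) - f (x i) * G (g i)| := (Finset.sum_attach _ _).symm
      _ = ∑ j : Fin m, |F (E' j) - f (x' j) * G (E' j)| :=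
          (Fintype.sum_equiv e.toEquiv _ _ fun j => rfl).symm
      _ < ε / 2 := hkey
  calc ∑ i, pSem ε (x i) (1 * r i) (fun E => F E - f (x i) * G E)
      ≤ ENNReal.ofReal (ε / 2) := main
    _ < ENNReal.ofReal ε := by
        rw [ENNReal.ofReal_lt_ofReal_iff hε]; linarith
end
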